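/- Given f : ℕ → ℕ, let (0, Π) be the chopped real where 0 is the identically zero function and Π is a partition of ℕ into intervals such that for every n, if n lies in interval I_k then f(n) lies in interval I_l for some l ≤ k+1. Given a chopped real (x, Θ), let g : ℕ → ℕ send each n to the right endpoint of the interval of Θ following the one containing n. Then: if (x, Θ) engulfs (0, Π), then f ≤* g. -/
import Mathlib


/-- `a : ℕ → ℕ` codes a partition of ℕ into consecutive finite intervals
`[a n, a (n+1))` with `a 0 = 0` and `a` strictly increasing. -/
def IntervalPartition (a : ℕ → ℕ) : Prop := a 0 = 0 ∧ StrictMono a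

/-- `y` matches the chopped real `(x, a)`: `y` agrees with `x` on infinitely
many intervals of the partition. -/
def Matches (y : ℕ → Bool) (x : ℕ → Bool) (a : ℕ → ℕ) : Prop :=
  { n : ℕ | ∀ i ∈ Set.Ico (a n) (a (n + 1)), y i = x i }.Infinite

/-- The set of reals matching the chopped real `(x, a)`. -/
def MatchSet (x : ℕ → Bool) (a : ℕ → ℕ) : Set (ℕ → Bool) := { y | Matches y x a }

/-- `(x, a)` engulfs `(x', a')`: all but finitely many intervals of `a` include
an interval of `a'` on which `x` and `x'` agree. -/
def Engulfs (x : ℕ → Bool) (a : ℕ → ℕ) (x' : ℕ → Bool) (a' : ℕ → ℕ) : Prop :=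
  { n : ℕ | ¬ ∃ m : ℕ, Set.Ico (a' m) (a' (m + 1)) ⊆ Set.Ico (a n) (a (n + 1)) ∧
      ∀ i ∈ Set.Ico (a' m) (a' (m + 1)), x i = x' i }.Finite

/-- Given `f : ℕ → ℕ` and a partition `p` with the property that `f` moves each
point at most one interval forward, and given a chopped real `(x, t)` where
`g n` is the right endpoint of the interval of `t` following the one containing
`n`: if `(x, t)` engulfs `(0, p)`, then `f ≤* g`. -/

lemma exists_interval {a : ℕ → ℕ} (h : IntervalPartition a) (n : ℕ) :
    ∃ k, n ∈ Set.Ico (a k) (a (k + 1)) := by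
  classical
  obtain ⟨h0, hmono⟩ := h
  have hP : ∃ k, n < a k := ⟨n + 1, lt_of_lt_of_le (Nat.lt_succ_self n) hmono.le_apply⟩
  have hk : n < a (Nat.find hP) := Nat.find_spec hP
  have hkpos : Nat.find hP ≠ 0 := by
    intro h
    rw [h, h0] at hk; exact Nat.not_lt_zero n hk
  obtain ⟨k', hke⟩ := Nat.exists_eq_succ_of_ne_zero hkpos
  rw [hke] at hk
  refine ⟨k', ⟨?_, hk⟩⟩
  by_contra hc
  exact Nat.find_min hP (hke ▸ Nat.lt_succ_self k') (Nat.lt_of_not_le hc)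

theorem stmt9 (f : ℕ → ℕ) (p : ℕ → ℕ) (hp : IntervalPartition p)
    (hfp : ∀ n k : ℕ, n ∈ Set.Ico (p k) (p (k + 1)) →
      ∃ l ≤ k + 1, f n ∈ Set.Ico (p l) (p (l + 1)))
    (x : ℕ → Bool) (t : ℕ → ℕ) (ht : IntervalPartition t)
    (g : ℕ → ℕ)
    (hg : ∀ n k : ℕ, n ∈ Set.Ico (t k) (t (k + 1)) → g n = t (k + 2))
    (heng : Engulfs x t (fun _ => false) p) :
    ∀ᶠ n in Filter.atTop, f n ≤ g n := by
  classical
  obtain ⟨ht0, htmono⟩ := ht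
  obtain ⟨K, hK⟩ := heng.bddAbove
  rw [Filter.eventually_atTop]
  refine ⟨t (K + 1), fun n hn => ?_⟩
  obtain ⟨k, hk1, hk2⟩ := exists_interval ⟨ht0, htmono⟩ n
  have hKk : K < k + 1 := by
    have h1 : t (K + 1) < t (k + 1) := lt_of_le_of_lt hn hk2
    have := htmono.lt_iff_lt.mp h1
    omega
  have hgood : ∃ m : ℕ, Set.Ico (p m) (p (m + 1)) ⊆ Set.Ico (t (k+1)) (t (k + 2)) ∧
      ∀ i ∈ Set.Ico (p m) (p (m + 1)), x i = (fun _ => false) i := by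
    by_contra hc
    exact absurd (hK hc) (by omega)
  obtain ⟨m, hsub, -⟩ := hgood
  obtain ⟨j, hj1, hj2⟩ := exists_interval hp n
  obtain ⟨l, hl, hfl1, hfl2⟩ := hfp n j ⟨hj1, hj2⟩
  have hpm : p m < p (m + 1) := hp.2 (Nat.lt_succ_self m)
  obtain ⟨hpmA, hpmB⟩ := hsub ⟨le_refl (p m), hpm⟩
  have hjm : j < m := by
    by_contra hc
    have : p m ≤ p j := hp.2.le_iff_le.mpr (Nat.le_of_not_lt hc)
    omega
  have hlm : p (l + 1) ≤ p (m + 1) := hp.2.le_iff_le.mpr (by omega)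
  have hpm2 : p (m + 1) ≤ t (k + 2) := by
    by_contra hc
    obtain ⟨hA, hB⟩ := hsub ⟨le_of_lt hpmB, Nat.lt_of_not_le hc⟩
    omega
  rw [hg n k ⟨hk1, hk2⟩]
  omega
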